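/- Let B, N > 0 and p ∈ C([0,T]). The boundary value problem v''(t) - B(B+N⁻¹)v(t) = N⁻¹ p(t) on [0,T], with v(0) = 0 and v'(T) + (B+N⁻¹)v(T) = 0, has a unique C² solution, and this solution is v = -N⁻¹ H(G*(p)), where G* and H are the solution operators as defined. -/

import Mathlib

open Set Real


/-- the boundary value problem
`v'' - B(B+N⁻¹)v = N⁻¹ p`, `v(0)=0`, `v'(T) + (B+N⁻¹)v(T) = 0`
has a unique C² solution, namely `v = -N⁻¹ H(G*(p))`. Here `Gs = G*(p)` and
`w = H(G*(p))` (with auxiliary `A = G*(w)`). -/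
theorem stmt_17 (T B N : ℝ) (hT : 0 < T) (hB : 0 < B) (hN : 0 < N)
    (p Gs Gs' w w' A A' : ℝ → ℝ)
    (hp : ContinuousOn p (Set.Icc 0 T))
    -- Gs = G*(p)
    (hGsd : ∀ t ∈ Set.Icc (0:ℝ) T, HasDerivWithinAt Gs (Gs' t) (Set.Icc 0 T) t)
    (hGsc : ContinuousOn Gs' (Set.Icc 0 T))
    (hGseq : ∀ t ∈ Set.Icc (0:ℝ) T, -Gs' t + (B + N⁻¹) * Gs t = p t)
    (hGsT : Gs T = 0)
    -- w = H(Gs), A = G*(w)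
    (hwd : ∀ t ∈ Set.Icc (0:ℝ) T, HasDerivWithinAt w (w' t) (Set.Icc 0 T) t)
    (hwc : ContinuousOn w' (Set.Icc 0 T))
    (hAd : ∀ t ∈ Set.Icc (0:ℝ) T, HasDerivWithinAt A (A' t) (Set.Icc 0 T) t)
    (hAc : ContinuousOn A' (Set.Icc 0 T))
    (hAeq : ∀ t ∈ Set.Icc (0:ℝ) T, -A' t + (B + N⁻¹) * A t = w t)
    (hAT : A T = 0)
    (hweq : ∀ t ∈ Set.Icc (0:ℝ) T,
      w' t + (B + N⁻¹) * w t - N⁻¹ * (B + N⁻¹) * A t = Gs t)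
    (hw0 : w 0 = 0) :
    -- existence: v = -N⁻¹ w solves the BVP
    ((∃ v'' : ℝ → ℝ, ContinuousOn v'' (Set.Icc 0 T) ∧
        (∀ t ∈ Set.Icc (0:ℝ) T,
          HasDerivWithinAt (fun s => -N⁻¹ * w' s) (v'' t) (Set.Icc 0 T) t) ∧
        (∀ t ∈ Set.Icc (0:ℝ) T,
          v'' t - B * (B + N⁻¹) * (-N⁻¹ * w t) = N⁻¹ * p t))
      ∧ -N⁻¹ * w 0 = 0
      ∧ -N⁻¹ * w' T + (B + N⁻¹) * (-N⁻¹ * w T) = 0)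
    -- uniqueness: any C² solution of the BVP equals -N⁻¹ w
    ∧ (∀ v v' v'' : ℝ → ℝ,
        (∀ t ∈ Set.Icc (0:ℝ) T, HasDerivWithinAt v (v' t) (Set.Icc 0 T) t) →
        (∀ t ∈ Set.Icc (0:ℝ) T, HasDerivWithinAt v' (v'' t) (Set.Icc 0 T) t) →
        ContinuousOn v'' (Set.Icc 0 T) →
        (∀ t ∈ Set.Icc (0:ℝ) T, v'' t - B * (B + N⁻¹) * v t = N⁻¹ * p t) →
        v 0 = 0 → v' T + (B + N⁻¹) * v T = 0 →
        ∀ t ∈ Set.Icc (0:ℝ) T, v t = -N⁻¹ * w t) := by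
  have hN' : 0 < N⁻¹ := by positivity
  have hk : 0 < B + N⁻¹ := by positivity
  have hTmem : T ∈ Set.Icc (0:ℝ) T := ⟨le_of_lt hT, le_refl T⟩
  -- second derivative of w
  set w'' : ℝ → ℝ := fun t => Gs' t - (B + N⁻¹) * w' t + N⁻¹ * (B + N⁻¹) * A' t with hw''def
  have hw'd : ∀ t ∈ Set.Icc (0:ℝ) T, HasDerivWithinAt w' (w'' t) (Set.Icc 0 T) t := by
    intro t ht
    have h1 : HasDerivWithinAt (fun s => Gs s - (B + N⁻¹) * w s + N⁻¹ * (B + N⁻¹) * A s)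
        (Gs' t - (B + N⁻¹) * w' t + N⁻¹ * (B + N⁻¹) * A' t) (Set.Icc 0 T) t :=
      ((hGsd t ht).sub ((hwd t ht).const_mul _)).add ((hAd t ht).const_mul _)
    exact h1.congr (fun s hs => by have := hweq s hs; linarith)
      (by have := hweq t ht; linarith)
  have hw''c : ContinuousOn w'' (Set.Icc 0 T) :=
    (hGsc.sub (continuousOn_const.mul hwc)).add (continuousOn_const.mul hAc)
  -- key identity: -w'' + B(B+N⁻¹) w = p
  have hwpp : ∀ t ∈ Set.Icc (0:ℝ) T, -(w'' t) + B * (B + N⁻¹) * w t = p t := by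
    intro t ht
    simp only [hw''def]
    linear_combination hGseq t ht + (B + N⁻¹) * hweq t ht + (B + N⁻¹) * N⁻¹ * hAeq t ht
  -- boundary identity for w at T
  have hwT : w' T + (B + N⁻¹) * w T = 0 := by
    have h := hweq T hTmem
    rw [hAT, hGsT] at h; linarith
  constructor
  · refine ⟨⟨fun t => -N⁻¹ * w'' t, continuousOn_const.mul hw''c, fun t ht =>
      (hw'd t ht).const_mul _, fun t ht => ?_⟩, by rw [hw0]; ring, by linear_combination -N⁻¹ * hwT⟩
    linear_combination N⁻¹ * hwpp t ht
  · intro v v' v'' hvd hv'd hv''c hveq hv0 hvT t ht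
    set μ := Real.sqrt (B * (B + N⁻¹)) with hμdef
    have hμpos : 0 < μ := Real.sqrt_pos.2 (by positivity)
    have hμ2 : μ * μ = B * (B + N⁻¹) := Real.mul_self_sqrt (by positivity)
    -- u := v + N⁻¹ w solves u'' = μ² u, u(0)=0, u'(T)+ku(T)=0
    have huueq : ∀ s ∈ Set.Icc (0:ℝ) T,
        v'' s + N⁻¹ * w'' s = μ * μ * (v s + N⁻¹ * w s) := by
      intro s hs
      rw [hμ2]
      linear_combination hveq s hs - N⁻¹ * hwpp s hs
    have hu0 : v 0 + N⁻¹ * w 0 = 0 := by rw [hv0, hw0]; ring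
    have hbT : (v' T + N⁻¹ * w' T) + (B + N⁻¹) * (v T + N⁻¹ * w T) = 0 := by
      linear_combination hvT + N⁻¹ * hwT
    have hud : ∀ s ∈ Set.Icc (0:ℝ) T,
        HasDerivWithinAt (fun s => v s + N⁻¹ * w s) (v' s + N⁻¹ * w' s) (Set.Icc 0 T) s :=
      fun s hs => (hvd s hs).add ((hwd s hs).const_mul _)
    have hu'd : ∀ s ∈ Set.Icc (0:ℝ) T,
        HasDerivWithinAt (fun s => v' s + N⁻¹ * w' s) (v'' s + N⁻¹ * w'' s) (Set.Icc 0 T) s :=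
      fun s hs => (hv'd s hs).add ((hw'd s hs).const_mul _)
    -- exponential auxiliary
    have hexp : ∀ (a : ℝ) (s : ℝ),
        HasDerivAt (fun s => Real.exp (a * s)) (a * Real.exp (a * s)) s := by
      intro a s
      have h1 : HasDerivAt (fun s : ℝ => a * s) a s := by
        simpa using (hasDerivAt_id s).const_mul a
      exact ((Real.hasDerivAt_exp (a * s)).comp s h1).congr_deriv (mul_comm _ _)
    -- φ and ψ
    set c := v' 0 + N⁻¹ * w' 0 with hcdef
    have key : ∀ a : ℝ, a * a = μ * μ → ∀ s ∈ Set.Icc (0:ℝ) T,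
        ((v' s + N⁻¹ * w' s) + a * (v s + N⁻¹ * w s)) * Real.exp (-a * s) = c := by
      intro a ha s hs
      have hder : ∀ x ∈ Set.Icc (0:ℝ) T, HasDerivWithinAt
          (fun s => ((v' s + N⁻¹ * w' s) + a * (v s + N⁻¹ * w s)) * Real.exp (-a * s))
          0 (Set.Icc 0 T) x := by
        intro x hx
        have h1 := ((hu'd x hx).add ((hud x hx).const_mul a)).mul
          ((hexp (-a) x).hasDerivWithinAt)
        have h2 : (v'' x + N⁻¹ * w'' x + a * (v' x + N⁻¹ * w' x)) * Real.exp (-a * x)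
            + ((v' x + N⁻¹ * w' x) + a * (v x + N⁻¹ * w x)) * (-a * Real.exp (-a * x)) = 0 := by
          rw [huueq x hx, ← ha]; ring
        exact h1.congr_deriv h2
      have hdiff : DifferentiableOn ℝ
          (fun s => ((v' s + N⁻¹ * w' s) + a * (v s + N⁻¹ * w s)) * Real.exp (-a * s))
          (Set.Icc 0 T) := fun x hx => ((hder x hx).differentiableWithinAt)
      have hconst := constant_of_derivWithin_zero hdiff (fun x hx =>
        (hder x (Set.Ico_subset_Icc_self hx)).derivWithin
          ((uniqueDiffOn_Icc hT) x (Set.Ico_subset_Icc_self hx)))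
      have := hconst s hs
      simpa [hu0] using this
    have hφ := key μ rfl
    have hψ := key (-μ) (by ring)
    -- boundary at T forces c = 0
    have hE : Real.exp (-μ * T) < Real.exp (μ * T) := by
      apply Real.exp_lt_exp.2; nlinarith
    have hEpos : 0 < Real.exp (-μ * T) := Real.exp_pos _
    have hc0 : c = 0 := by
      have h1 := hφ T hTmem
      have h2 := hψ T hTmem
      -- from h1,h2: expressions; combine with hbT
      have e1 : ((v' T + N⁻¹ * w' T) + μ * (v T + N⁻¹ * w T)) =
          c * Real.exp (μ * T) := by
        calc ((v' T + N⁻¹ * w' T) + μ * (v T + N⁻¹ * w T))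
            = ((v' T + N⁻¹ * w' T) + μ * (v T + N⁻¹ * w T)) * Real.exp (-μ * T)
              * Real.exp (μ * T) := by
              rw [mul_assoc, ← Real.exp_add]; simp
          _ = c * Real.exp (μ * T) := by rw [h1]
      have e2 : ((v' T + N⁻¹ * w' T) + -μ * (v T + N⁻¹ * w T)) =
          c * Real.exp (-μ * T) := by
        calc ((v' T + N⁻¹ * w' T) + -μ * (v T + N⁻¹ * w T))
            = ((v' T + N⁻¹ * w' T) + -μ * (v T + N⁻¹ * w T)) * Real.exp (μ * T)
              * Real.exp (-μ * T) := by
              rw [mul_assoc, ← Real.exp_add]; simp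
          _ = c * Real.exp (-μ * T) := by
              have h2' : ((v' T + N⁻¹ * w' T) + -μ * (v T + N⁻¹ * w T)) *
                  Real.exp (μ * T) = c := by
                have := h2; rw [show -(-μ) * T = μ * T by ring] at this; exact this
              rw [h2']
      have hfac : c * (μ * (Real.exp (μ * T) + Real.exp (-μ * T))
          + (B + N⁻¹) * (Real.exp (μ * T) - Real.exp (-μ * T))) = 0 := by
        linear_combination (-(μ + (B + N⁻¹))) * e1 + (-(μ - (B + N⁻¹))) * e2 + 2 * μ * hbT
      have hposfac : 0 < μ * (Real.exp (μ * T) + Real.exp (-μ * T))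
          + (B + N⁻¹) * (Real.exp (μ * T) - Real.exp (-μ * T)) := by nlinarith
      rcases mul_eq_zero.mp hfac with h | h
      · exact h
      · exact absurd h (ne_of_gt hposfac)
    -- conclude u ≡ 0
    have h1 := hφ t ht
    have h2 := hψ t ht
    rw [hc0] at h1 h2
    have hne1 : Real.exp (-μ * t) ≠ 0 := ne_of_gt (Real.exp_pos _)
    have hne2 : Real.exp (-(-μ) * t) ≠ 0 := ne_of_gt (Real.exp_pos _)
    have h1' : (v' t + N⁻¹ * w' t) + μ * (v t + N⁻¹ * w t) = 0 := by
      rcases mul_eq_zero.mp h1 with h | h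
      · exact h
      · exact absurd h hne1
    have h2' : (v' t + N⁻¹ * w' t) + -μ * (v t + N⁻¹ * w t) = 0 := by
      rcases mul_eq_zero.mp h2 with h | h
      · exact h
      · exact absurd h hne2
    have hu : μ * (v t + N⁻¹ * w t) = 0 := by linarith
    have := mul_eq_zero.mp hu
    rcases this with h | h
    · exact absurd h (ne_of_gt hμpos)
    · linarith
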